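/- Fix an integer N ≥ 1, c₁, …, c_N ∈ ℂ with c_j ≠ 1, and let R(z,w) = (w − z²)^{N+1} / (z·∏_{j=1}^N (w − c_j z²)). Fix λ ∈ ℂ, λ ≠ 0, and for s ∈ ℂ set z(s) = −λ·s·∏_{j=1}^N (1 + (c_j − 1)s) and w(s) = λ²·s·(s − 1)·∏_{j=1}^N (1 + (c_j − 1)s)². Then for every s ∈ ℂ with s ≠ 0 and 1 + (c_j − 1)s ≠ 0 for all j, one has z(s)² − w(s) = z(s)²/s and R(z(s), w(s)) = λ. (Thus s ↦ (z(s), w(s)) parametrizes the level curve {R = λ}, and these level curves are rational.) -/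
import Mathlib


/-- Type a2 dual billiards: rational parametrization of the level curves
`{R = λ}` of `R(z,w) = (w − z²)^{N+1} / (z·∏_{j=1}^N (w − c_j z²))`. -/
theorem stmt_3 (N : ℕ) (hN : 1 ≤ N) (c : Fin N → ℂ) (hc : ∀ j, c j ≠ 1)
    (lam : ℂ) (hlam : lam ≠ 0)
    (z w : ℂ → ℂ)
    (hz : ∀ s : ℂ, z s = -lam * s * ∏ j, (1 + (c j - 1) * s))
    (hw : ∀ s : ℂ, w s = lam ^ 2 * s * (s - 1) * ∏ j, (1 + (c j - 1) * s) ^ 2)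
    (s : ℂ) (hs : s ≠ 0) (hfac : ∀ j, 1 + (c j - 1) * s ≠ 0) :
    z s ^ 2 - w s = z s ^ 2 / s ∧
    (w s - z s ^ 2) ^ (N + 1) / (z s * ∏ j, (w s - c j * z s ^ 2)) = lam := by
  set P : ℂ := ∏ j, (1 + (c j - 1) * s) with hPdef
  have hP : P ≠ 0 := Finset.prod_ne_zero_iff.mpr fun j _ => hfac j
  have hP2 : (∏ j, (1 + (c j - 1) * s) ^ 2) = P ^ 2 := by
    rw [hPdef, Finset.prod_pow]
  have hz' : z s = -lam * s * P := hz s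
  have hw' : w s = lam ^ 2 * s * (s - 1) * P ^ 2 := by rw [hw s, hP2]
  have hdiff : w s - z s ^ 2 = -(lam ^ 2 * s * P ^ 2) := by
    rw [hz', hw']; ring
  have hprod : (∏ j, (w s - c j * z s ^ 2)) =
      (-(lam ^ 2 * s * P ^ 2)) ^ N * P := by
    have : ∀ j ∈ Finset.univ, (w s - c j * z s ^ 2)
        = -(lam ^ 2 * s * P ^ 2) * (1 + (c j - 1) * s) := by
      intro j _
      rw [hz', hw']; ring
    rw [Finset.prod_congr rfl this, Finset.prod_mul_distrib,
      Finset.prod_const, ← hPdef, Finset.card_univ, Fintype.card_fin]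
  constructor
  · rw [hz', hw']
    field_simp
    ring
  · rw [hdiff, hprod, hz']
    have h1 : -(lam ^ 2 * s * P ^ 2) ≠ 0 := by
      simp [hlam, hs, hP]
    field_simp
    ring
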